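/- (Fischer decomposition in superspace.) Assume M ∉ {0, −2, −4, …}. Then for every integer k ≥ 0, the space 𝒫_k is the internal direct sum 𝒫_k = ⊕_{i=0}^{⌊k/2⌋} x^{2i} ℋ_{k−2i} of the subspaces x^{2i} ℋ_{k−2i} = {x^{2i} H : H ∈ ℋ_{k−2i}}. -/

import Mathlib

set_option synthInstance.maxHeartbeats 1000000
set_option maxHeartbeats 1000000
open scoped TensorProduct
open MvPolynomial

noncomputable section

variable (m n : ℕ)

/-- The Grassmann algebra Λ_{2n} on `2n` anticommuting generators. -/
abbrev Grass (n : ℕ) := ExteriorAlgebra ℝ (Fin (2*n) → ℝ)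

/-- The algebra of super-polynomials 𝒫 = ℝ[x_1,…,x_m] ⊗ Λ_{2n}. -/
abbrev SuperPoly (m n : ℕ) := MvPolynomial (Fin m) ℝ ⊗[ℝ] Grass n

/-- The fermionic generator x`_i. -/
def fgen (i : Fin (2*n)) : Grass n :=
  ExteriorAlgebra.ι ℝ (Pi.single i (1:ℝ))

/-- The fermionic partial derivative ∂_{x`_i}, the odd derivation with
∂_{x`_i}(x`_j) = δ_{ij}: contraction with the i-th dual basis vector. -/
def fpderiv (i : Fin (2*n)) : Grass n →ₗ[ℝ] Grass n :=
  CliffordAlgebra.contractLeft (LinearMap.proj i)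

/-- The fermionic Laplace operator on Λ_{2n}. -/
def lapF : Grass n →ₗ[ℝ] Grass n :=
  (4:ℝ) • ∑ j : Fin n,
    (fpderiv n ⟨2*j.1, by omega⟩) ∘ₗ (fpderiv n ⟨2*j.1+1, by omega⟩)

/-- The bosonic Laplace operator Δ_b = −∑ ∂_{x_j}² on ℝ[x_1,…,x_m]. -/
def lapB : MvPolynomial (Fin m) ℝ →ₗ[ℝ] MvPolynomial (Fin m) ℝ :=
  - ∑ j : Fin m, (pderiv j).toLinearMap ∘ₗ (pderiv j).toLinearMap

/-- The super Laplace operator Δ = Δ_b + Δ_f on 𝒫. -/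
def lap : SuperPoly m n →ₗ[ℝ] SuperPoly m n :=
  LinearMap.rTensor (Grass n) (lapB m) + LinearMap.lTensor (MvPolynomial (Fin m) ℝ) (lapF n)

/-- x̲² = −∑ x_j². -/
def rb2 : MvPolynomial (Fin m) ℝ := - ∑ j : Fin m, (X j)^2

/-- x`² = ∑_{j=1}^n x`_{2j−1} x`_{2j}. -/
def rf2 : Grass n := ∑ j : Fin n, fgen n ⟨2*j.1, by omega⟩ * fgen n ⟨2*j.1+1, by omega⟩

/-- The generalized norm squared x² = x̲² + x`² as an element of 𝒫. -/
def r2 : SuperPoly m n := (rb2 m) ⊗ₜ 1 + 1 ⊗ₜ (rf2 n)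

/-- The grade-`i` part of the Grassmann algebra. -/
def fgrade (i : ℕ) : Submodule ℝ (Grass n) :=
  (LinearMap.range (ExteriorAlgebra.ι ℝ (M := Fin (2*n) → ℝ)))^i

/-- The space 𝒫_k of super-polynomials homogeneous of total degree k. -/
def P (k : ℕ) : Submodule ℝ (SuperPoly m n) :=
  ⨆ i : Fin (k+1), Submodule.map₂ (TensorProduct.mk ℝ _ _)
    (homogeneousSubmodule (Fin m) ℝ (k - i.1)) (fgrade n i.1)

/-- The space ℋ_k of spherical harmonics of degree k. -/
def H (k : ℕ) : Submodule ℝ (SuperPoly m n) :=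
  P m n k ⊓ LinearMap.ker (lap m n)

/-- The super-dimension M = m − 2n. -/
def sdim : ℤ := (m : ℤ) - 2*n

/-- x^{2i} ℋ_{k−2i} = {x^{2i} H : H ∈ ℋ_{k−2i}} as a subspace of 𝒫. -/
def fischerPiece (m n k i : ℕ) : Submodule ℝ (SuperPoly m n) :=
  Submodule.map (LinearMap.mulLeft ℝ ((r2 m n)^i)) (H m n (k - 2*i))

namespace FischerAux

section Generic
variable {Mod : Type*} [AddCommGroup Mod] [Module ℝ Mod]

lemma iSup_univ_eq {N : ℕ} (p : Fin N → Submodule ℝ Mod) :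
    (⨆ i ∈ (Finset.univ : Finset (Fin N)), p i) = ⨆ i, p i := by
  simp

lemma mem_iSup_fin {N : ℕ} {p : Fin N → Submodule ℝ Mod} {x : Mod}
    (hx : x ∈ ⨆ i, p i) : ∃ μ : ∀ i, p i, ∑ i, (μ i : Mod) = x := by
  rw [← iSup_univ_eq] at hx
  exact (Submodule.mem_iSup_finset_iff_exists_sum p x).mp hx

lemma components_zero_of_indep {N : ℕ} {p : Fin N → Submodule ℝ Mod}
    (hp : iSupIndep p) (μ : ∀ i, p i) (h : ∑ i, (μ i : Mod) = 0) :
    ∀ i, (μ i : Mod) = 0 := by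
  intro i
  have hsum : (μ i : Mod) + ∑ j ∈ Finset.univ.erase i, (μ j : Mod) = 0 := by
    have h2 := Finset.add_sum_erase Finset.univ (fun j => (μ j : Mod)) (Finset.mem_univ i)
    rw [h] at h2; exact h2
  have hmem : (μ i : Mod) ∈ ⨆ (j) (_ : j ≠ i), p j := by
    have : (μ i : Mod) = -∑ j ∈ Finset.univ.erase i, (μ j : Mod) :=
      eq_neg_of_add_eq_zero_left hsum
    rw [this]
    refine neg_mem (Submodule.sum_mem _ fun j hj => ?_)
    exact Submodule.mem_iSup_of_mem j
      (Submodule.mem_iSup_of_mem (Finset.ne_of_mem_erase hj) (μ j).2)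
  exact Submodule.disjoint_def.mp (iSupIndep_def.mp hp i) _ (μ i).2 hmem

lemma indep_of_components_zero {N : ℕ} {p : Fin N → Submodule ℝ Mod}
    (h : ∀ μ : ∀ i, p i, ∑ i, (μ i : Mod) = 0 → ∀ i, (μ i : Mod) = 0) :
    iSupIndep p := by
  rw [iSupIndep_def]
  intro i
  rw [Submodule.disjoint_def]
  intro x hxi hxrest
  have hle : (⨆ (j) (_ : j ≠ i), p j) ≤ ⨆ j ∈ Finset.univ.erase i, p j := by
    refine iSup₂_le fun j hj => ?_
    exact le_iSup₂ (f := fun (j : Fin N) (_ : j ∈ Finset.univ.erase i) => p j) j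
      (Finset.mem_erase.mpr ⟨hj, Finset.mem_univ j⟩)
  obtain ⟨μ', hμ'⟩ := (Submodule.mem_iSup_finset_iff_exists_sum p x).mp (hle hxrest)
  classical
  set ν : ∀ j, p j := fun j => if hj : j = i then ⟨-x, by rw [hj]; exact neg_mem hxi⟩ else μ' j
    with hν
  have hνsum : ∑ j, (ν j : Mod) = 0 := by
    rw [← Finset.add_sum_erase Finset.univ (fun j => (ν j : Mod)) (Finset.mem_univ i)]
    have h1 : (ν i : Mod) = -x := by simp [hν]
    have h2 : ∑ j ∈ Finset.univ.erase i, (ν j : Mod) = ∑ j ∈ Finset.univ.erase i, (μ' j : Mod) :=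
      Finset.sum_congr rfl fun j hj => by
        simp [hν, (Finset.mem_erase.mp hj).1]
    rw [h1, h2, hμ']; simp
  have := h ν hνsum i
  have h1 : (ν i : Mod) = -x := by simp [hν]
  rw [h1] at this
  simpa using this

end Generic

section Bosonic
variable {m : ℕ}

lemma degree_eq_sum_univ (s : Fin m →₀ ℕ) : s.degree = ∑ j, s j :=
  Finset.sum_subset (Finset.subset_univ _) fun x _ hx => Finsupp.notMem_support_iff.mp hx

lemma degree_of_mem_support {p : MvPolynomial (Fin m) ℝ} {d : ℕ} (hp : p.IsHomogeneous d)
    {s : Fin m →₀ ℕ} (hs : s ∈ p.support) : s.degree = d := by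
  rw [Finsupp.degree_eq_weight_one]
  exact hp (mem_support_iff.mp hs)

lemma pderiv_homog_zero {p : MvPolynomial (Fin m) ℝ} (hp : p.IsHomogeneous 0) (j : Fin m) :
    pderiv j p = 0 := by
  have hrep : pderiv j p = ∑ s ∈ p.support, pderiv j (monomial s (coeff s p)) := by
    conv_lhs => rw [← support_sum_monomial_coeff p]
    rw [map_sum]
  rw [hrep]
  refine Finset.sum_eq_zero fun s hs => ?_
  have hs0 : s = 0 := (Finsupp.degree_eq_zero_iff s).mp (degree_of_mem_support hp hs)
  rw [pderiv_monomial, hs0]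
  simp

lemma isHomogeneous_pderiv {p : MvPolynomial (Fin m) ℝ} {d : ℕ} (hp : p.IsHomogeneous d)
    (j : Fin m) : (pderiv j p).IsHomogeneous (d - 1) := by
  have hrep : pderiv j p = ∑ s ∈ p.support, pderiv j (monomial s (coeff s p)) := by
    conv_lhs => rw [← support_sum_monomial_coeff p]
    rw [map_sum]
  rw [hrep]
  refine IsHomogeneous.sum _ _ _ fun s hs => ?_
  rw [pderiv_monomial]
  rcases Nat.eq_zero_or_pos (s j) with h | h
  · rw [h]; simp only [Nat.cast_zero, mul_zero, monomial_zero]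
    exact isHomogeneous_zero _ _ _
  · apply isHomogeneous_monomial
    have hdeg : s.degree = d := degree_of_mem_support hp hs
    have hle : ∀ t, (Finsupp.single j 1) t ≤ s t := by
      intro t
      rcases eq_or_ne j t with rfl | ht
      · simp [Finsupp.single_apply]; omega
      · simp [Finsupp.single_apply, ht]
    rw [degree_eq_sum_univ]
    simp only [Finsupp.tsub_apply]
    rw [Finset.sum_tsub_distrib _ fun t _ => hle t]
    have h1 : ∑ t, (Finsupp.single j 1) t = 1 := by
      simp [Finsupp.single_apply]
    rw [h1, ← degree_eq_sum_univ, hdeg]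

lemma X_mul_pderiv_monomial (s : Fin m →₀ ℕ) (c : ℝ) (j : Fin m) :
    X j * pderiv j (monomial s c) = (s j) • monomial s c := by
  rw [pderiv_monomial]
  rcases Nat.eq_zero_or_pos (s j) with h | h
  · simp [h]
  · have hsum : Finsupp.single j 1 + (s - Finsupp.single j 1) = s := by
      ext t
      rcases eq_or_ne j t with rfl | ht
      · simp [Finsupp.single_apply]; omega
      · simp [Finsupp.single_apply, ht]
    rw [X, monomial_mul, hsum, one_mul, smul_monomial, nsmul_eq_mul, mul_comm]

lemma euler {p : MvPolynomial (Fin m) ℝ} {d : ℕ} (hp : p.IsHomogeneous d) :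
    ∑ j, X j * pderiv j p = (d : ℝ) • p := by
  calc ∑ j, X j * pderiv j p
      = ∑ j, ∑ s ∈ p.support, X j * pderiv j (monomial s (coeff s p)) := by
        refine Finset.sum_congr rfl fun j _ => ?_
        conv_lhs => rw [← support_sum_monomial_coeff p]
        rw [map_sum, Finset.mul_sum]
    _ = ∑ s ∈ p.support, ∑ j, (s j) • monomial s (coeff s p) := by
        rw [Finset.sum_comm]
        exact Finset.sum_congr rfl fun s _ => Finset.sum_congr rfl fun j _ =>
          X_mul_pderiv_monomial s (coeff s p) j
    _ = ∑ s ∈ p.support, (d : ℝ) • monomial s (coeff s p) := by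
        refine Finset.sum_congr rfl fun s hs => ?_
        rw [← Finset.sum_smul, ← degree_eq_sum_univ, degree_of_mem_support hp hs,
          Nat.cast_smul_eq_nsmul]
    _ = (d : ℝ) • p := by rw [← Finset.smul_sum, support_sum_monomial_coeff]

lemma lapB_apply (p : MvPolynomial (Fin m) ℝ) :
    lapB m p = -∑ j, pderiv j (pderiv j p) := by
  rw [lapB]
  simp [LinearMap.sum_apply]

lemma pderiv_rb2 (j : Fin m) : pderiv j (rb2 m) = -(2 * X j) := by
  rw [rb2, map_neg, map_sum]
  have hterm : ∀ t : Fin m, pderiv j ((X t : MvPolynomial (Fin m) ℝ)^2)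
      = if t = j then 2 * X j else 0 := by
    intro t
    rcases eq_or_ne t j with rfl | ht
    · rw [pow_two, pderiv_mul, pderiv_X_self, if_pos rfl]; ring
    · rw [pow_two, pderiv_mul, pderiv_X_of_ne ht, if_neg ht]; ring
  rw [Finset.sum_congr rfl fun t _ => hterm t, Finset.sum_ite_eq' Finset.univ j]
  simp

lemma two_eq_C : (2 : MvPolynomial (Fin m) ℝ) = C 2 := (map_ofNat C 2).symm

lemma four_eq_C : (4 : MvPolynomial (Fin m) ℝ) = C 4 := (map_ofNat C 4).symm

lemma pd2_rb2_mul (j : Fin m) (p : MvPolynomial (Fin m) ℝ) :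
    pderiv j (pderiv j (rb2 m * p)) =
      rb2 m * pderiv j (pderiv j p) - 2 * p - 4 * (X j * pderiv j p) := by
  have hC : pderiv j ((2:MvPolynomial (Fin m) ℝ) * X j) = 2 := by
    rw [pderiv_mul, two_eq_C, pderiv_C, pderiv_X_self]
    ring
  have e1 : pderiv j (rb2 m * p) = -(2 * X j) * p + rb2 m * pderiv j p := by
    rw [pderiv_mul, pderiv_rb2]
  rw [e1, map_add, neg_mul, map_neg, pderiv_mul, hC, pderiv_mul, pderiv_rb2]
  ring

lemma lapB_rb2_mul {p : MvPolynomial (Fin m) ℝ} {d : ℕ} (hp : p.IsHomogeneous d) :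
    lapB m (rb2 m * p) = rb2 m * lapB m p + ((2*(m:ℝ) + 4*(d:ℝ))) • p := by
  rw [lapB_apply, lapB_apply,
    Finset.sum_congr rfl fun j (_ : j ∈ Finset.univ) => pd2_rb2_mul j p]
  have hsum3 : ∑ j : Fin m, (4:MvPolynomial (Fin m) ℝ) * (X j * pderiv j p)
      = 4 * ∑ j, X j * pderiv j p := by rw [Finset.mul_sum]
  rw [Finset.sum_sub_distrib, Finset.sum_sub_distrib, ← Finset.mul_sum, hsum3,
    Finset.sum_const, Finset.card_univ, Fintype.card_fin, euler hp]
  simp only [smul_eq_C_mul, map_add, map_mul, ← two_eq_C, ← four_eq_C, nsmul_eq_mul,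
    map_natCast]
  ring

lemma lapB_mem {p : MvPolynomial (Fin m) ℝ} {d : ℕ} (hp : p.IsHomogeneous d) :
    (lapB m p).IsHomogeneous (d - 2) := by
  rw [lapB_apply, ← mem_homogeneousSubmodule]
  refine neg_mem (Submodule.sum_mem _ fun j _ => ?_)
  rw [mem_homogeneousSubmodule, show d - 2 = d - 1 - 1 by omega]
  exact isHomogeneous_pderiv (isHomogeneous_pderiv hp j) j

lemma lapB_zero {p : MvPolynomial (Fin m) ℝ} {d : ℕ} (hp : p.IsHomogeneous d) (hd : d ≤ 1) :
    lapB m p = 0 := by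
  rw [lapB_apply]
  interval_cases d
  · simp [pderiv_homog_zero hp]
  · have : ∀ j : Fin m, pderiv j (pderiv j p) = 0 := fun j =>
      pderiv_homog_zero (by simpa using isHomogeneous_pderiv hp j) j
    simp [this]

end Bosonic

section Fermionic
variable {n : ℕ}

lemma fpderiv_ι_mul (i : Fin (2*n)) (v : Fin (2*n) → ℝ) (g : Grass n) :
    fpderiv n i (ExteriorAlgebra.ι ℝ v * g) = v i • g - ExteriorAlgebra.ι ℝ v * fpderiv n i g := by
  rw [fpderiv]
  exact CliffordAlgebra.contractLeft_ι_mul _ _ _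

lemma fpderiv_fgen_mul_self (i : Fin (2*n)) (g : Grass n) :
    fpderiv n i (fgen n i * g) = g - fgen n i * fpderiv n i g := by
  rw [fgen, fpderiv_ι_mul]
  simp

lemma fpderiv_fgen_mul_ne {i t : Fin (2*n)} (h : t ≠ i) (g : Grass n) :
    fpderiv n i (fgen n t * g) = -(fgen n t * fpderiv n i g) := by
  rw [fgen, fpderiv_ι_mul]
  simp [Pi.single_apply, h]

lemma fpderiv_pair_diag {p q : Fin (2*n)} (hpq : p ≠ q) (g : Grass n) :
    fpderiv n p (fpderiv n q (fgen n p * (fgen n q * g))) =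
      fgen n p * (fgen n q * fpderiv n p (fpderiv n q g))
        + (- g + fgen n p * fpderiv n p g + fgen n q * fpderiv n q g) := by
  rw [fpderiv_fgen_mul_ne hpq, fpderiv_fgen_mul_self, mul_sub, map_neg, map_sub,
    fpderiv_fgen_mul_self, fpderiv_fgen_mul_self, fpderiv_fgen_mul_ne (Ne.symm hpq)]
  noncomm_ring

lemma fpderiv_pair_cross {p q p' q' : Fin (2*n)} (h1 : p' ≠ q) (h2 : q' ≠ q)
    (h3 : p' ≠ p) (h4 : q' ≠ p) (g : Grass n) :
    fpderiv n p (fpderiv n q (fgen n p' * (fgen n q' * g))) =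
      fgen n p' * (fgen n q' * fpderiv n p (fpderiv n q g)) := by
  rw [fpderiv_fgen_mul_ne h1, fpderiv_fgen_mul_ne h2, mul_neg, neg_neg,
    fpderiv_fgen_mul_ne h3, fpderiv_fgen_mul_ne h4, mul_neg, neg_neg]

lemma fgrade_zero_eq : fgrade n 0 = 1 := pow_zero _

lemma fpderiv_fgrade_zero (i : Fin (2*n)) {g : Grass n} (hg : g ∈ fgrade n 0) :
    fpderiv n i g = 0 := by
  rw [fgrade_zero_eq] at hg
  obtain ⟨r, rfl⟩ := Submodule.mem_one.mp hg
  rw [fpderiv]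
  exact CliffordAlgebra.contractLeft_algebraMap _ _ _

lemma fgrade_succ (e : ℕ) :
    fgrade n (e+1) = LinearMap.range (ExteriorAlgebra.ι ℝ (M := Fin (2*n) → ℝ)) * fgrade n e := by
  rw [fgrade, fgrade, pow_succ']

lemma fpderiv_mem_fgrade (i : Fin (2*n)) : ∀ (e : ℕ) {g : Grass n}, g ∈ fgrade n e →
    fpderiv n i g ∈ fgrade n (e-1) := by
  intro e
  induction e with
  | zero => intro g hg; rw [fpderiv_fgrade_zero i hg]; exact zero_mem _
  | succ e ih =>
    intro g hg
    rw [fgrade_succ] at hg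
    refine Submodule.mul_induction_on hg (fun x hx y hy => ?_) (fun x y hx hy => ?_)
    · obtain ⟨v, rfl⟩ := hx
      rw [fpderiv_ι_mul]
      refine sub_mem (Submodule.smul_mem _ _ (by simpa using hy)) ?_
      rcases e with _ | e
      · rw [fpderiv_fgrade_zero i hy, mul_zero]; exact zero_mem _
      · have hmem := ih hy
        simp only [Nat.add_sub_cancel] at hmem ⊢
        rw [fgrade_succ]
        exact Submodule.mul_mem_mul (LinearMap.mem_range_self _ v) hmem
    · rw [map_add]; exact add_mem hx hy

lemma sum_smul_fgen (v : Fin (2*n) → ℝ) :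
    ∑ i, v i • fgen n i = ExteriorAlgebra.ι ℝ v := by
  have hs : ∀ i : Fin (2*n), v i • fgen n i
      = ExteriorAlgebra.ι ℝ (Pi.single i (v i) : Fin (2*n) → ℝ) := by
    intro i
    rw [fgen, ← map_smul]
    congr 1
    ext t
    rcases eq_or_ne t i with rfl | ht
    · simp
    · simp [Pi.single_apply, ht]
  rw [Finset.sum_congr rfl fun i _ => hs i, ← map_sum, Finset.univ_sum_single]

lemma fgen_mul_ι (i : Fin (2*n)) (v : Fin (2*n) → ℝ) (w : Grass n) :
    fgen n i * (ExteriorAlgebra.ι ℝ v * w) = -(ExteriorAlgebra.ι ℝ v * (fgen n i * w)) := by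
  have h := ExteriorAlgebra.ι_add_mul_swap (R := ℝ) (Pi.single i (1:ℝ)) v
  have h' : fgen n i * ExteriorAlgebra.ι ℝ v = -(ExteriorAlgebra.ι ℝ v * fgen n i) := by
    rw [fgen]
    exact eq_neg_of_add_eq_zero_left h
  rw [← mul_assoc, h', neg_mul, mul_assoc]

lemma fermionic_euler : ∀ (e : ℕ) {g : Grass n}, g ∈ fgrade n e →
    ∑ i, fgen n i * fpderiv n i g = (e : ℝ) • g := by
  intro e
  induction e with
  | zero =>
    intro g hg
    have hz : ∀ i : Fin (2*n), fpderiv n i g = 0 := fun i => fpderiv_fgrade_zero i hg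
    simp [hz]
  | succ e ih =>
    intro g hg
    rw [fgrade_succ] at hg
    refine Submodule.mul_induction_on hg (fun x hx y hy => ?_) (fun x y hx hy => ?_)
    · obtain ⟨v, rfl⟩ := hx
      have hstep : ∀ i : Fin (2*n), fgen n i * fpderiv n i (ExteriorAlgebra.ι ℝ v * y)
          = v i • (fgen n i * y) - (-(ExteriorAlgebra.ι ℝ v * (fgen n i * fpderiv n i y))) := by
        intro i
        rw [fpderiv_ι_mul, mul_sub, mul_smul_comm, fgen_mul_ι]
      rw [Finset.sum_congr rfl fun i _ => hstep i, Finset.sum_sub_distrib]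
      have h1 : ∑ i, v i • (fgen n i * y) = ExteriorAlgebra.ι ℝ v * y := by
        simp only [← smul_mul_assoc]
        rw [← Finset.sum_mul, sum_smul_fgen]
      have h2 : ∑ i, -(ExteriorAlgebra.ι ℝ v * (fgen n i * fpderiv n i y))
          = -(ExteriorAlgebra.ι ℝ v * ((e:ℝ) • y)) := by
        rw [Finset.sum_neg_distrib, ← Finset.mul_sum, ih hy]
      rw [h1, h2, sub_neg_eq_add, mul_smul_comm]
      push_cast
      module
    · simp only [map_add, mul_add, Finset.sum_add_distrib, hx, hy, smul_add]

lemma lapF_apply (g : Grass n) :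
    lapF n g = (4:ℝ) • ∑ j : Fin n,
      fpderiv n ⟨2*j.1, by omega⟩ (fpderiv n ⟨2*j.1+1, by omega⟩ g) := by
  rw [lapF]
  simp [LinearMap.sum_apply]

lemma lapF_mem (e : ℕ) {g : Grass n} (hg : g ∈ fgrade n e) : lapF n g ∈ fgrade n (e-2) := by
  rw [lapF_apply]
  refine Submodule.smul_mem _ _ (Submodule.sum_mem _ fun j _ => ?_)
  have ha := fpderiv_mem_fgrade (⟨2*j.1+1, by omega⟩ : Fin (2*n)) e hg
  have hb := fpderiv_mem_fgrade (⟨2*j.1, by omega⟩ : Fin (2*n)) (e-1) ha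
  rwa [show e - 1 - 1 = e - 2 by omega] at hb

lemma lapF_zero {e : ℕ} (he : e ≤ 1) {g : Grass n} (hg : g ∈ fgrade n e) : lapF n g = 0 := by
  have h0 : ∀ j : Fin (2*n), fpderiv n j g ∈ fgrade n 0 := by
    intro j
    have := fpderiv_mem_fgrade j e hg
    rwa [show e - 1 = 0 by omega] at this
  have hz : ∀ i j : Fin (2*n), fpderiv n i (fpderiv n j g) = 0 := fun i j =>
    fpderiv_fgrade_zero i (h0 j)
  rw [lapF_apply]
  simp [hz]

lemma sum_range_two_mul {A : Type*} [AddCommMonoid A] (N : ℕ) (f : ℕ → A) :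
    ∑ t ∈ Finset.range (2*N), f t = ∑ i ∈ Finset.range N, (f (2*i) + f (2*i+1)) := by
  induction N with
  | zero => simp
  | succ N ih =>
    rw [show 2*(N+1) = (2*N+1)+1 by ring, Finset.sum_range_succ, Finset.sum_range_succ, ih,
      Finset.sum_range_succ]
    abel

lemma sum_fin_two_mul {A : Type*} [AddCommMonoid A] (f : Fin (2*n) → A) :
    ∑ t, f t = ∑ i : Fin n, (f ⟨2*i.1, by omega⟩ + f ⟨2*i.1+1, by omega⟩) := by
  classical
  set F : ℕ → A := fun t => if h : t < 2*n then f ⟨t, h⟩ else 0 with hF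
  have h1 : ∑ t, f t = ∑ t ∈ Finset.range (2*n), F t := by
    rw [← Fin.sum_univ_eq_sum_range]
    refine Finset.sum_congr rfl fun t _ => ?_
    simp [hF]
  have h2 : ∑ i : Fin n, (f ⟨2*i.1, by omega⟩ + f ⟨2*i.1+1, by omega⟩)
      = ∑ i ∈ Finset.range n, (F (2*i) + F (2*i+1)) := by
    rw [← Fin.sum_univ_eq_sum_range (fun i => F (2*i) + F (2*i+1)) n]
    refine Finset.sum_congr rfl fun i _ => ?_
    have hi1 : 2*i.1 < 2*n := by omega
    have hi2 : 2*i.1+1 < 2*n := by omega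
    simp [hF, hi1, hi2]
  rw [h1, sum_range_two_mul, ← h2]

lemma lapF_rf2_mul {e : ℕ} {g : Grass n} (hg : g ∈ fgrade n e) :
    lapF n (rf2 n * g) = rf2 n * lapF n g + (4*(e:ℝ) - 4*(n:ℝ)) • g := by
  classical
  have hrfg : rf2 n * g = ∑ j : Fin n,
      fgen n ⟨2*j.1, by omega⟩ * (fgen n ⟨2*j.1+1, by omega⟩ * g) := by
    rw [rf2, Finset.sum_mul]
    exact Finset.sum_congr rfl fun j _ => mul_assoc _ _ _
  rw [lapF_apply (rf2 n * g), hrfg]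
  simp only [map_sum]
  have hT : ∀ i j : Fin n,
      fpderiv n ⟨2*i.1, by omega⟩ (fpderiv n ⟨2*i.1+1, by omega⟩
        (fgen n ⟨2*j.1, by omega⟩ * (fgen n ⟨2*j.1+1, by omega⟩ * g)))
      = fgen n ⟨2*j.1, by omega⟩ * (fgen n ⟨2*j.1+1, by omega⟩ *
          fpderiv n ⟨2*i.1, by omega⟩ (fpderiv n ⟨2*i.1+1, by omega⟩ g))
        + (if j = i then (- g + fgen n ⟨2*i.1, by omega⟩ * fpderiv n ⟨2*i.1, by omega⟩ g
            + fgen n ⟨2*i.1+1, by omega⟩ * fpderiv n ⟨2*i.1+1, by omega⟩ g) else 0) := by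
    intro i j
    rcases eq_or_ne j i with rfl | hji
    · rw [if_pos rfl]
      exact fpderiv_pair_diag (by simp only [ne_eq, Fin.mk.injEq]; omega) g
    · have hval : j.1 ≠ i.1 := Fin.val_ne_of_ne hji
      rw [if_neg hji, add_zero]
      exact fpderiv_pair_cross
        (by simp only [ne_eq, Fin.mk.injEq]; omega)
        (by simp only [ne_eq, Fin.mk.injEq]; omega)
        (by simp only [ne_eq, Fin.mk.injEq]; omega)
        (by simp only [ne_eq, Fin.mk.injEq]; omega) g
  rw [Finset.sum_congr rfl fun i _ => Finset.sum_congr rfl fun j _ => hT i j]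
  simp only [Finset.sum_add_distrib]
  have h5 : ∑ i : Fin n, ∑ j : Fin n, fgen n ⟨2*j.1, by omega⟩ * (fgen n ⟨2*j.1+1, by omega⟩ *
        fpderiv n ⟨2*i.1, by omega⟩ (fpderiv n ⟨2*i.1+1, by omega⟩ g))
      = ∑ j : Fin n, fgen n ⟨2*j.1, by omega⟩ * (fgen n ⟨2*j.1+1, by omega⟩ *
          ∑ i : Fin n, fpderiv n ⟨2*i.1, by omega⟩ (fpderiv n ⟨2*i.1+1, by omega⟩ g)) := by
    rw [Finset.sum_comm]
    exact Finset.sum_congr rfl fun j _ => by rw [← Finset.mul_sum, ← Finset.mul_sum]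
  have h7 : ∑ i : Fin n, ∑ j : Fin n,
      (if j = i then (- g + fgen n ⟨2*i.1, by omega⟩ * fpderiv n ⟨2*i.1, by omega⟩ g
          + fgen n ⟨2*i.1+1, by omega⟩ * fpderiv n ⟨2*i.1+1, by omega⟩ g) else 0)
      = ∑ i : Fin n, (- g + fgen n ⟨2*i.1, by omega⟩ * fpderiv n ⟨2*i.1, by omega⟩ g
          + fgen n ⟨2*i.1+1, by omega⟩ * fpderiv n ⟨2*i.1+1, by omega⟩ g) := by
    refine Finset.sum_congr rfl fun i _ => ?_
    rw [Finset.sum_ite_eq' Finset.univ i]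
    simp
  have h8 : ∑ i : Fin n, (- g + fgen n ⟨2*i.1, by omega⟩ * fpderiv n ⟨2*i.1, by omega⟩ g
        + fgen n ⟨2*i.1+1, by omega⟩ * fpderiv n ⟨2*i.1+1, by omega⟩ g)
      = (n:ℕ) • (-g) + (e:ℝ) • g := by
    rw [Finset.sum_add_distrib, Finset.sum_add_distrib, Finset.sum_const, Finset.card_univ,
      Fintype.card_fin, add_assoc, ← Finset.sum_add_distrib,
      ← sum_fin_two_mul (fun t => fgen n t * fpderiv n t g), fermionic_euler e hg]
  have hR : rf2 n * lapF n g = (4:ℝ) • ∑ j : Fin n, fgen n ⟨2*j.1, by omega⟩ *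
      (fgen n ⟨2*j.1+1, by omega⟩ *
        ∑ i : Fin n, fpderiv n ⟨2*i.1, by omega⟩ (fpderiv n ⟨2*i.1+1, by omega⟩ g)) := by
    rw [lapF_apply g, mul_smul_comm]
    congr 1
    rw [rf2, Finset.sum_mul]
    exact Finset.sum_congr rfl fun j _ => mul_assoc _ _ _
  rw [h5, h7, h8, hR, smul_add]
  have hfin : (4:ℝ) • ((n:ℕ) • (-g) + (e:ℝ) • g) = (4*(e:ℝ) - 4*(n:ℝ)) • g := by
    rw [← Nat.cast_smul_eq_nsmul ℝ n (-g)]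
    module
  rw [hfin]

end Fermionic
section Super
variable {m n : ℕ}

lemma rb2_mem : rb2 m ∈ homogeneousSubmodule (Fin m) ℝ 2 := by
  rw [rb2]
  refine neg_mem (Submodule.sum_mem _ fun j _ => ?_)
  rw [mem_homogeneousSubmodule]
  exact isHomogeneous_X_pow j 2

lemma rf2_mem : rf2 n ∈ fgrade n 2 := by
  rw [rf2]
  refine Submodule.sum_mem _ fun j _ => ?_
  have h2 : fgrade n 2 = LinearMap.range (ExteriorAlgebra.ι ℝ (M := Fin (2*n) → ℝ)) *
      LinearMap.range (ExteriorAlgebra.ι ℝ (M := Fin (2*n) → ℝ)) := by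
    rw [fgrade, pow_two]
  rw [h2, fgen, fgen]
  exact Submodule.mul_mem_mul (LinearMap.mem_range_self _ _) (LinearMap.mem_range_self _ _)

lemma tmul_mem_P {k i : ℕ} (hik : i ≤ k) {p : MvPolynomial (Fin m) ℝ} {g : Grass n}
    (hp : p ∈ homogeneousSubmodule (Fin m) ℝ (k - i)) (hg : g ∈ fgrade n i) :
    p ⊗ₜ[ℝ] g ∈ P m n k := by
  have h := Submodule.apply_mem_map₂ (TensorProduct.mk ℝ (MvPolynomial (Fin m) ℝ) (Grass n)) hp hg
  exact le_iSup (fun i : Fin (k+1) => Submodule.map₂ (TensorProduct.mk ℝ _ _)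
    (homogeneousSubmodule (Fin m) ℝ (k - i.1)) (fgrade n i.1)) ⟨i, by omega⟩ h

lemma P_le (k : ℕ) {C : Submodule ℝ (SuperPoly m n)}
    (h : ∀ (i : ℕ), i ≤ k → ∀ p ∈ homogeneousSubmodule (Fin m) ℝ (k - i), ∀ g ∈ fgrade n i,
      p ⊗ₜ[ℝ] g ∈ C) : P m n k ≤ C := by
  refine iSup_le fun i => Submodule.map₂_le.mpr fun p hp g hg => ?_
  exact h i.1 (by omega) p hp g hg

lemma r2_mul_tmul (p : MvPolynomial (Fin m) ℝ) (g : Grass n) :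
    r2 m n * (p ⊗ₜ[ℝ] g) = (rb2 m * p) ⊗ₜ[ℝ] g + p ⊗ₜ[ℝ] (rf2 n * g) := by
  rw [r2, add_mul, Algebra.TensorProduct.tmul_mul_tmul, Algebra.TensorProduct.tmul_mul_tmul,
    one_mul, one_mul]

lemma mulLeft_r2_P {k : ℕ} {x : SuperPoly m n} (hx : x ∈ P m n k) :
    r2 m n * x ∈ P m n (k+2) := by
  have hle : P m n k ≤ Submodule.comap (LinearMap.mulLeft ℝ (r2 m n)) (P m n (k+2)) := by
    refine P_le k fun i hik p hp g hg => ?_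
    simp only [Submodule.mem_comap, LinearMap.mulLeft_apply]
    rw [r2_mul_tmul]
    refine add_mem (tmul_mem_P (show i ≤ k+2 by omega) ?_ hg)
      (tmul_mem_P (show i+2 ≤ k+2 by omega) ?_ ?_)
    · rw [mem_homogeneousSubmodule, show (k+2) - i = 2 + (k - i) by omega]
      exact IsHomogeneous.mul rb2_mem hp
    · rw [show (k+2) - (i+2) = k - i by omega]; exact hp
    · have h2 : rf2 n * g ∈ fgrade n (2+i) := by
        rw [fgrade, pow_add]
        exact Submodule.mul_mem_mul rf2_mem hg
      rwa [show 2+i = i+2 by omega] at h2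
  exact hle hx

lemma mulLeft_r2_pow_P (a : ℕ) {k : ℕ} {x : SuperPoly m n} (hx : x ∈ P m n k) :
    r2 m n ^ a * x ∈ P m n (k + 2*a) := by
  induction a with
  | zero => simpa using hx
  | succ a ih =>
    have h := mulLeft_r2_P ih
    rw [pow_succ', mul_assoc]
    rwa [show k + 2*(a+1) = (k + 2*a) + 2 by omega]

lemma lap_tmul (p : MvPolynomial (Fin m) ℝ) (g : Grass n) :
    lap m n (p ⊗ₜ[ℝ] g) = (lapB m p) ⊗ₜ[ℝ] g + p ⊗ₜ[ℝ] (lapF n g) := by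
  rw [lap]
  simp [LinearMap.add_apply]

lemma lap_P_le (k : ℕ) {x : SuperPoly m n} (hx : x ∈ P m n (k+2)) : lap m n x ∈ P m n k := by
  have hle : P m n (k+2) ≤ Submodule.comap (lap m n) (P m n k) := by
    refine P_le (k+2) fun i hik p hp g hg => ?_
    simp only [Submodule.mem_comap]
    rw [lap_tmul]
    refine add_mem ?_ ?_
    · by_cases hib : i ≤ k
      · refine tmul_mem_P hib ?_ hg
        have h2 := lapB_mem (p := p) (d := (k+2) - i) hp
        rw [show (k+2) - i - 2 = k - i by omega] at h2
        exact h2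
      · rw [lapB_zero hp (by omega), TensorProduct.zero_tmul]
        exact zero_mem _
    · by_cases hi2 : 2 ≤ i
      · refine tmul_mem_P (show i - 2 ≤ k by omega) ?_ (lapF_mem i hg)
        rwa [show k - (i-2) = (k+2) - i by omega]
      · rw [lapF_zero (by omega) hg, TensorProduct.tmul_zero]
        exact zero_mem _
  exact hle hx

lemma lap_P_le_one {k : ℕ} (hk : k ≤ 1) {x : SuperPoly m n} (hx : x ∈ P m n k) :
    lap m n x = 0 := by
  have hle : P m n k ≤ LinearMap.ker (lap m n) := by
    refine P_le k fun i hik p hp g hg => ?_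
    rw [LinearMap.mem_ker, lap_tmul, lapB_zero hp (by omega), lapF_zero (by omega) hg,
      TensorProduct.zero_tmul, TensorProduct.tmul_zero, add_zero]
  exact hle hx

lemma lap_r2_mul {k : ℕ} {x : SuperPoly m n} (hx : x ∈ P m n k) :
    lap m n (r2 m n * x) = r2 m n * lap m n x
      + (2*((sdim m n : ℤ):ℝ) + 4*(k:ℝ)) • x := by
  have hker : P m n k ≤ LinearMap.ker
      ((lap m n ∘ₗ LinearMap.mulLeft ℝ (r2 m n))
        - (LinearMap.mulLeft ℝ (r2 m n) ∘ₗ lap m n)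
        - (2*((sdim m n : ℤ):ℝ) + 4*(k:ℝ)) • LinearMap.id) := by
    refine P_le k fun i hik p hp g hg => ?_
    simp only [LinearMap.mem_ker, LinearMap.sub_apply, LinearMap.coe_comp, Function.comp_apply,
      LinearMap.mulLeft_apply, LinearMap.smul_apply, LinearMap.id_apply]
    rw [r2_mul_tmul, map_add, lap_tmul, lap_tmul, lap_tmul, mul_add, r2_mul_tmul, r2_mul_tmul,
      lapB_rb2_mul hp, lapF_rf2_mul hg]
    simp only [TensorProduct.add_tmul, TensorProduct.tmul_add, TensorProduct.tmul_smul,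
      ← TensorProduct.smul_tmul']
    rw [sdim, Nat.cast_sub hik]
    push_cast
    module
  have h := hker hx
  simp only [LinearMap.mem_ker, LinearMap.sub_apply, LinearMap.coe_comp, Function.comp_apply,
    LinearMap.mulLeft_apply, LinearMap.smul_apply, LinearMap.id_apply] at h
  rw [sub_sub, sub_eq_zero] at h
  exact h

def muS (m n k i : ℕ) : ℝ :=
  2*((i:ℝ)+1)*(((sdim m n : ℤ):ℝ) + 2*(((k - 2*i : ℕ)):ℝ) + 2*(i:ℝ))

lemma lap_r2_pow_mul {j : ℕ} {h : SuperPoly m n} (hh : h ∈ H m n j) : ∀ a : ℕ,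
    lap m n (r2 m n ^ (a+1) * h) =
      (2*((a:ℝ)+1)*(((sdim m n : ℤ):ℝ) + 2*(j:ℝ) + 2*(a:ℝ))) • (r2 m n ^ a * h) := by
  obtain ⟨hP, hker⟩ := hh
  have hker' : lap m n h = 0 := hker
  intro a
  induction a with
  | zero =>
    simp only [zero_add, pow_one, pow_zero, one_mul, Nat.cast_zero]
    rw [lap_r2_mul hP, hker', mul_zero, zero_add]
    congr 1
    ring
  | succ a ih =>
    have hmem : r2 m n ^ (a+1) * h ∈ P m n (j + 2*(a+1)) := mulLeft_r2_pow_P (a+1) hP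
    rw [pow_succ' (r2 m n) (a+1), mul_assoc, lap_r2_mul hmem, ih, mul_smul_comm,
      ← mul_assoc, ← pow_succ', ← add_smul]
    congr 1
    push_cast
    ring

lemma muS_ne_zero (hM : ∀ jj : ℕ, sdim m n ≠ -(2*(jj:ℤ))) (k i : ℕ) : muS m n k i ≠ 0 := by
  have h1 : ((sdim m n : ℤ):ℝ) + 2*(((k - 2*i : ℕ)):ℝ) + 2*(i:ℝ) ≠ 0 := by
    intro hc
    apply hM ((k - 2*i) + i)
    have h2 : ((sdim m n : ℤ):ℝ) = ((-(2*((((k - 2*i : ℕ)):ℤ)+(i:ℤ))) : ℤ) : ℝ) := by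
      push_cast
      linarith
    have h3 := Int.cast_injective (α := ℝ) h2
    rw [h3]
    push_cast
    ring
  exact mul_ne_zero (by positivity) h1

lemma lap_r2_pow_mul' {k : ℕ} (i : ℕ) {h : SuperPoly m n} (hh : h ∈ H m n (k - 2*i)) :
    lap m n (r2 m n ^ (i+1) * h) = muS m n k i • (r2 m n ^ i * h) :=
  lap_r2_pow_mul hh i

lemma fischerPiece_zero (K : ℕ) : fischerPiece m n K 0 = H m n K := by
  rw [fischerPiece, pow_zero, LinearMap.mulLeft_one, Submodule.map_id, Nat.mul_zero,
    Nat.sub_zero]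

lemma fischerPiece_succ (K i : ℕ) : fischerPiece m n (K+2) (i+1)
    = Submodule.map (LinearMap.mulLeft ℝ (r2 m n)) (fischerPiece m n K i) := by
  rw [fischerPiece, fischerPiece, pow_succ', LinearMap.mulLeft_mul, Submodule.map_comp,
    show (K+2) - 2*(i+1) = K - 2*i by omega]

lemma fischerPiece_le_P (K i : ℕ) (hi : 2*i ≤ K) : fischerPiece m n K i ≤ P m n K := by
  rw [fischerPiece, Submodule.map_le_iff_le_comap]
  intro h hh
  simp only [Submodule.mem_comap, LinearMap.mulLeft_apply]
  have h2 := mulLeft_r2_pow_P i hh.1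
  rwa [show (K - 2*i) + 2*i = K by omega] at h2

lemma base_case (K : ℕ) (hK : K ≤ 1) :
    P m n K = (⨆ i : Fin (K/2 + 1), fischerPiece m n K i.1) ∧
    iSupIndep (fun i : Fin (K/2 + 1) => fischerPiece m n K i.1) := by
  have hK2 : K/2 = 0 := by omega
  have hHP : H m n K = P m n K := by
    rw [H, inf_eq_left]
    intro x hx
    exact LinearMap.mem_ker.mpr (lap_P_le_one hK hx)
  constructor
  · apply le_antisymm
    · intro x hx
      have hx0 : x ∈ fischerPiece m n K 0 := by rw [fischerPiece_zero, hHP]; exact hx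
      exact le_iSup (fun i : Fin (K/2+1) => fischerPiece m n K i.1) ⟨0, by omega⟩ hx0
    · refine iSup_le fun i => ?_
      have hi0 : i.1 = 0 := by omega
      rw [hi0, fischerPiece_zero, hHP]
  · apply indep_of_components_zero
    intro μ hsum i
    have hcongr : ∀ j : Fin (K/2+1), (μ j : SuperPoly m n) = (μ i : SuperPoly m n) := by
      intro j
      rw [show j = i from Fin.ext (by omega)]
    have hs2 : ∑ j, (μ j : SuperPoly m n) = (K/2+1) • (μ i : SuperPoly m n) := by
      rw [Finset.sum_congr rfl fun j _ => hcongr j, Finset.sum_const, Finset.card_univ,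
        Fintype.card_fin]
    rw [hs2, ← Nat.cast_smul_eq_nsmul ℝ] at hsum
    exact (smul_eq_zero.mp hsum).resolve_left (Nat.cast_ne_zero.mpr (by omega))

lemma step_case (hM : ∀ j : ℕ, sdim m n ≠ -(2*(j:ℤ))) (k : ℕ)
    (IH : P m n k = (⨆ i : Fin (k/2 + 1), fischerPiece m n k i.1) ∧
      iSupIndep (fun i : Fin (k/2 + 1) => fischerPiece m n k i.1)) :
    P m n (k+2) = (⨆ i : Fin ((k+2)/2 + 1), fischerPiece m n (k+2) i.1) ∧
    iSupIndep (fun i : Fin ((k+2)/2 + 1) => fischerPiece m n (k+2) i.1) := by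
  obtain ⟨hdec, hind⟩ := IH
  have hsurj : ∀ q ∈ P m n k, ∃ w ∈ P m n k, lap m n (r2 m n * w) = q := by
    intro q hq
    rw [hdec] at hq
    obtain ⟨ν, hν⟩ := mem_iSup_fin hq
    have hch : ∀ i : Fin (k/2+1), ∃ h, h ∈ H m n (k - 2*i.1) ∧
        r2 m n ^ i.1 * h = (ν i : SuperPoly m n) := by
      intro i
      obtain ⟨h, hh, hmul⟩ := Submodule.mem_map.mp (ν i).2
      exact ⟨h, hh, hmul⟩
    choose hfun hmem hmul using hch
    refine ⟨∑ i, (muS m n k i.1)⁻¹ • (ν i : SuperPoly m n), ?_, ?_⟩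
    · exact Submodule.sum_mem _ fun i _ => Submodule.smul_mem _ _
        (fischerPiece_le_P k i.1 (by omega) (ν i).2)
    · have hterm : ∀ i : Fin (k/2+1),
          lap m n (r2 m n * ((muS m n k i.1)⁻¹ • (ν i : SuperPoly m n)))
          = (ν i : SuperPoly m n) := by
        intro i
        rw [mul_smul_comm, map_smul, ← hmul i, ← mul_assoc, ← pow_succ',
          lap_r2_pow_mul' i.1 (hmem i), smul_smul,
          inv_mul_cancel₀ (muS_ne_zero hM k i.1), one_smul]
      rw [Finset.mul_sum, map_sum, Finset.sum_congr rfl fun i _ => hterm i, hν]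
  have hinj : ∀ q ∈ P m n k, lap m n (r2 m n * q) = 0 → q = 0 := by
    intro q hq h0
    rw [hdec] at hq
    obtain ⟨ν, hν⟩ := mem_iSup_fin hq
    have hch : ∀ i : Fin (k/2+1), ∃ h, h ∈ H m n (k - 2*i.1) ∧
        r2 m n ^ i.1 * h = (ν i : SuperPoly m n) := by
      intro i
      obtain ⟨h, hh, hmul⟩ := Submodule.mem_map.mp (ν i).2
      exact ⟨h, hh, hmul⟩
    choose hfun hmem hmul using hch
    have hlap : lap m n (r2 m n * q) = ∑ i, muS m n k i.1 • (ν i : SuperPoly m n) := by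
      rw [← hν, Finset.mul_sum, map_sum]
      refine Finset.sum_congr rfl fun i _ => ?_
      rw [← hmul i, ← mul_assoc, ← pow_succ', lap_r2_pow_mul' i.1 (hmem i)]
    rw [h0] at hlap
    have hz := components_zero_of_indep hind
      (fun i => ⟨muS m n k i.1 • (ν i : SuperPoly m n),
        Submodule.smul_mem _ _ (ν i).2⟩) hlap.symm
    have hν0 : ∀ i, (ν i : SuperPoly m n) = 0 := by
      intro i
      have h2 := hz i
      exact (smul_eq_zero.mp h2).resolve_left (muS_ne_zero hM k i.1)
    rw [← hν]
    exact Finset.sum_eq_zero fun i _ => hν0 i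
  have hdec2 : P m n (k+2) = ⨆ i : Fin ((k+2)/2+1), fischerPiece m n (k+2) i.1 := by
    apply le_antisymm
    · intro x hx
      have hlx := lap_P_le k hx
      obtain ⟨w, hw, hlw⟩ := hsurj _ hlx
      have hrw : r2 m n * w ∈ P m n (k+2) := mulLeft_r2_P hw
      have hxw : x - r2 m n * w ∈ fischerPiece m n (k+2) 0 := by
        rw [fischerPiece_zero]
        exact ⟨sub_mem hx hrw, LinearMap.mem_ker.mpr (by rw [map_sub, hlw, sub_self])⟩
      have hx1 : x - r2 m n * w ∈ ⨆ i : Fin ((k+2)/2+1), fischerPiece m n (k+2) i.1 :=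
        le_iSup (fun i : Fin ((k+2)/2+1) => fischerPiece m n (k+2) i.1)
          (⟨0, by omega⟩ : Fin ((k+2)/2+1)) hxw
      have hx2 : r2 m n * w ∈ ⨆ i : Fin ((k+2)/2+1), fischerPiece m n (k+2) i.1 := by
        rw [hdec] at hw
        obtain ⟨ν, hν⟩ := mem_iSup_fin hw
        rw [← hν, Finset.mul_sum]
        refine Submodule.sum_mem _ fun i _ => ?_
        have hpiece : r2 m n * (ν i : SuperPoly m n) ∈ fischerPiece m n (k+2) (i.1+1) := by
          rw [fischerPiece_succ]
          exact Submodule.mem_map_of_mem (ν i).2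
        exact le_iSup (fun i : Fin ((k+2)/2+1) => fischerPiece m n (k+2) i.1)
          (⟨i.1+1, by omega⟩ : Fin ((k+2)/2+1)) hpiece
      have := add_mem hx1 hx2
      rwa [sub_add_cancel] at this
    · refine iSup_le fun i => fischerPiece_le_P (k+2) i.1 (by omega)
  refine ⟨hdec2, ?_⟩
  apply indep_of_components_zero
  intro μ hsum i
  have hνmem : ∀ t : Fin (k/2+1), ((μ (⟨t.1+1, by omega⟩ : Fin ((k+2)/2+1)) : SuperPoly m n))
      ∈ Submodule.map (LinearMap.mulLeft ℝ (r2 m n)) (fischerPiece m n k t.1) := by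
    intro t
    have h2 : ((μ (⟨t.1+1, by omega⟩ : Fin ((k+2)/2+1)) : SuperPoly m n))
        ∈ fischerPiece m n (k+2) (t.1+1) := (μ (⟨t.1+1, by omega⟩ : Fin ((k+2)/2+1))).2
    exact (le_of_eq (fischerPiece_succ k t.1)) h2
  choose q hqmem hqmul using fun t => Submodule.mem_map.mp (hνmem t)
  have hNN : k/2 + 1 = (k+2)/2 := by omega
  have hsplit : (μ (⟨0, by omega⟩ : Fin ((k+2)/2+1)) : SuperPoly m n)
      + ∑ t : Fin (k/2+1), (μ (⟨t.1+1, by omega⟩ : Fin ((k+2)/2+1)) : SuperPoly m n) = 0 := by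
    rw [← hsum, Fin.sum_univ_succ (fun i : Fin ((k+2)/2+1) => (μ i : SuperPoly m n))]
    congr 1
    exact Fintype.sum_equiv (finCongr hNN)
      (fun t : Fin (k/2+1) => (μ (⟨t.1+1, by omega⟩ : Fin ((k+2)/2+1)) : SuperPoly m n))
      (fun i : Fin ((k+2)/2) => (μ i.succ : SuperPoly m n)) (fun t => rfl)
  have hQP : ∑ t, q t ∈ P m n k :=
    Submodule.sum_mem _ fun t _ => fischerPiece_le_P k t.1 (by omega) (hqmem t)
  have hsum2 : ∑ t : Fin (k/2+1), (μ (⟨t.1+1, by omega⟩ : Fin ((k+2)/2+1)) : SuperPoly m n)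
      = r2 m n * ∑ t, q t := by
    rw [Finset.mul_sum]
    exact (Finset.sum_congr rfl fun t _ => (hqmul t).symm)
  have hμ0 : (μ (⟨0, by omega⟩ : Fin ((k+2)/2+1)) : SuperPoly m n) = 0 := by
    have hμ0mem : ((μ (⟨0, by omega⟩ : Fin ((k+2)/2+1)) : SuperPoly m n))
        ∈ fischerPiece m n (k+2) 0 := (μ (⟨0, by omega⟩ : Fin ((k+2)/2+1))).2
    have hμ0mem' : ((μ (⟨0, by omega⟩ : Fin ((k+2)/2+1)) : SuperPoly m n)) ∈ H m n (k+2) :=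
      (le_of_eq (fischerPiece_zero (k+2))) hμ0mem
    have heq : (μ (⟨0, by omega⟩ : Fin ((k+2)/2+1)) : SuperPoly m n)
        = -(r2 m n * ∑ t, q t) := by
      rw [← hsum2]
      exact eq_neg_of_add_eq_zero_left hsplit
    have hlap0 : lap m n (r2 m n * ∑ t, q t) = 0 := by
      have h2 : lap m n ((μ (⟨0, by omega⟩ : Fin ((k+2)/2+1)) : SuperPoly m n)) = 0 := LinearMap.mem_ker.mp hμ0mem'.2
      rw [heq, map_neg, neg_eq_zero] at h2
      exact h2
    have hQ0 : ∑ t, q t = 0 := hinj _ hQP hlap0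
    rw [heq, hQ0, mul_zero, neg_zero]
  have hQ0 : ∑ t, q t = 0 := by
    apply hinj _ hQP
    rw [← hsum2]
    have h3 := hsplit
    rw [hμ0, zero_add] at h3
    rw [h3, map_zero]
  have hq0 : ∀ t, q t = 0 := fun t =>
    components_zero_of_indep hind (fun t => ⟨q t, hqmem t⟩) hQ0 t
  rcases i with ⟨ti, hti⟩
  rcases ti with _ | ti
  · exact hμ0
  · have htle : ti < k/2 + 1 := by omega
    have heqμ : (μ (⟨(⟨ti, htle⟩ : Fin (k/2+1)).1+1, by omega⟩ : Fin ((k+2)/2+1)) : SuperPoly m n)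
        = (μ ⟨ti+1, hti⟩ : SuperPoly m n) := rfl
    rw [← heqμ, ← hqmul ⟨ti, htle⟩, hq0 ⟨ti, htle⟩]
    simp

end Super
end FischerAux

/-- Fischer decomposition in superspace: assume M ∉ {0, −2, −4, …}.  Then for
every k ≥ 0, 𝒫_k is the internal direct sum 𝒫_k = ⊕_{i=0}^{⌊k/2⌋} x^{2i} ℋ_{k−2i}. -/
theorem fischer_decomposition (m n : ℕ) (hm : 1 ≤ m) (hn : 1 ≤ n)
    (hM : ∀ j : ℕ, sdim m n ≠ -(2*(j:ℤ))) (k : ℕ) :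
    P m n k = (⨆ i : Fin (k/2 + 1), fischerPiece m n k i.1) ∧
    iSupIndep (fun i : Fin (k/2 + 1) => fischerPiece m n k i.1) := by
  induction k using Nat.strong_induction_on with
  | _ k IH =>
    rcases k with _ | _ | k
    · exact FischerAux.base_case 0 (by omega)
    · exact FischerAux.base_case 1 (by omega)
    · exact FischerAux.step_case hM k (IH k (by omega))

end
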